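/- arXiv:quant-ph/0506052 — 3 statements merged into one kernel-verified Lean document; each statement's English description precedes it below -/
import Mathlib

section
/- Suppose that for every choice of finite-dimensional complex Hilbert spaces H₁, H₂, H₁', H₂' and every state σ on (H₁⊗H₂) ⊗ (H₁'⊗H₂') the strong superadditivity of entanglement of formation holds: E_f(σ) ≥ E_f(tr_{H₁'⊗H₂'} σ) + E_f(tr_{H₁⊗H₂} σ) (with E_f computed across the 1–2 cuts). Then for every pure state ρ on (H₁⊗H₂) ⊗ (H₁'⊗H₂'), E_m(ρ) ≥ E_m(tr_{H₁'⊗H₂'} ρ) + E_m(tr_{H₁⊗H₂} ρ), with E_m computed across the same cuts. -/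
open Matrix Kronecker BigOperators ComplexOrder

noncomputable section

namespace QAdditivity

/-- von Neumann entropy of a matrix (junk value `0` if not Hermitian):
`S(ρ) = -∑ᵢ λᵢ log λᵢ` over the eigenvalues of `ρ`. -/
def entropy {ι : Type} [Fintype ι] [DecidableEq ι] (ρ : Matrix ι ι ℂ) : ℝ :=
  if h : ρ.IsHermitian then ∑ i, Real.negMulLog (h.eigenvalues i) else 0

/-- A state: positive semidefinite with trace one. -/
def IsState {ι : Type} [Fintype ι] (ρ : Matrix ι ι ℂ) : Prop :=
  ρ.PosSemidef ∧ ρ.trace = 1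

/-- A pure state: rank-one state, i.e. `|φ⟩⟨φ|` for a unit vector `φ`. -/
def IsPureState {ι : Type} [Fintype ι] (ρ : Matrix ι ι ℂ) : Prop :=
  ∃ φ : ι → ℂ, star φ ⬝ᵥ φ = 1 ∧ ρ = vecMulVec φ (star φ)

/-- Partial trace over the second tensor factor. -/
def trRight {ι κ : Type} [Fintype ι] [Fintype κ]
    (ρ : Matrix (ι × κ) (ι × κ) ℂ) : Matrix ι ι ℂ :=
  Matrix.of fun i j => ∑ k, ρ (i, k) (j, k)

/-- Partial trace over the first tensor factor. -/
def trLeft {ι κ : Type} [Fintype ι] [Fintype κ]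
    (ρ : Matrix (ι × κ) (ι × κ) ℂ) : Matrix κ κ ℂ :=
  Matrix.of fun k l => ∑ i, ρ (i, k) (i, l)

/-- Entanglement of a (pure) bipartite state: `E(π) = S(tr_{H₂} π)`. -/
def pureEnt {ι κ : Type} [Fintype ι] [Fintype κ] [DecidableEq ι]
    (π : Matrix (ι × κ) (ι × κ) ℂ) : ℝ :=
  entropy (trRight π)

/-- `E_m(ρ)`: minimum over finite pure-state ensembles for `ρ` of the minimal
entanglement appearing in the ensemble. -/
def Em {ι κ : Type} [Fintype ι] [Fintype κ] [DecidableEq ι]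
    (ρ : Matrix (ι × κ) (ι × κ) ℂ) : ℝ :=
  sInf { e : ℝ | ∃ (n : ℕ) (p : Fin (n + 1) → ℝ)
      (π : Fin (n + 1) → Matrix (ι × κ) (ι × κ) ℂ),
    (∀ i, 0 < p i) ∧ (∀ i, IsPureState (π i)) ∧
    (∑ i, (p i : ℂ) • π i) = ρ ∧
    e = Finset.univ.inf' Finset.univ_nonempty fun i => pureEnt (π i) }

/-- Entanglement of formation `E_f(ρ)`. -/
def Ef {ι κ : Type} [Fintype ι] [Fintype κ] [DecidableEq ι]
    (ρ : Matrix (ι × κ) (ι × κ) ℂ) : ℝ :=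
  sInf { e : ℝ | ∃ (n : ℕ) (p : Fin (n + 1) → ℝ)
      (π : Fin (n + 1) → Matrix (ι × κ) (ι × κ) ℂ),
    (∀ i, 0 < p i) ∧ (∀ i, IsPureState (π i)) ∧
    (∑ i, (p i : ℂ) • π i) = ρ ∧
    e = ∑ i, p i * pureEnt (π i) }

/-- Canonical reordering `(H₁⊗H₂)⊗(H₁'⊗H₂') ≃ (H₁⊗H₁')⊗(H₂⊗H₂')` on matrices. -/
def reorder {a b a' b' : Type}
    (M : Matrix ((a × b) × (a' × b')) ((a × b) × (a' × b')) ℂ) :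
    Matrix ((a × a') × (b × b')) ((a × a') × (b × b')) ℂ :=
  Matrix.reindex (Equiv.prodProdProdComm a b a' b') (Equiv.prodProdProdComm a b a' b') M

/-- Complete positivity of a superoperator. -/
def IsCompletelyPositive {κ η : Type} [Fintype κ] [Fintype η]
    (f : Matrix κ κ ℂ → Matrix η η ℂ) : Prop :=
  ∀ (n : ℕ) (M : Matrix (κ × Fin n) (κ × Fin n) ℂ), M.PosSemidef →
    Matrix.PosSemidef (Matrix.of fun p q : η × Fin n =>
      f (Matrix.of fun a b => M (a, p.2) (b, q.2)) p.1 q.1)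

/-- A quantum channel: a completely positive trace preserving linear map. -/
def IsChannel {κ η : Type} [Fintype κ] [Fintype η]
    (f : Matrix κ κ ℂ → Matrix η η ℂ) : Prop :=
  IsLinearMap ℂ f ∧ IsCompletelyPositive f ∧ ∀ M, (f M).trace = M.trace

/-- Minimum output entropy of a channel. -/
def Smin {κ η : Type} [Fintype κ] [Fintype η] [DecidableEq η]
    (f : Matrix κ κ ℂ → Matrix η η ℂ) : ℝ :=
  sInf { e : ℝ | ∃ ρ : Matrix κ κ ℂ, IsState ρ ∧ e = entropy (f ρ) }

/-- The tensor product `Λ ⊗ Λ'` of two superoperators (defined on all of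
`B(K ⊗ K')` by linearity via matrix units). -/
def tensorChannel {κ η κ' η' : Type} [Fintype κ] [Fintype κ']
    [DecidableEq κ] [DecidableEq κ']
    (f : Matrix κ κ ℂ → Matrix η η ℂ) (g : Matrix κ' κ' ℂ → Matrix η' η' ℂ) :
    Matrix (κ × κ') (κ × κ') ℂ → Matrix (η × η') (η × η') ℂ :=
  fun M => Matrix.of fun p q =>
    ∑ a, ∑ b, ∑ a', ∑ b', M (a, a') (b, b') *
      f (Matrix.single a b 1) p.1 q.1 *
      g (Matrix.single a' b' 1) p.2 q.2

/-- Support of an operator: its range. -/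
def supp {ι : Type} [Fintype ι] (ρ : Matrix ι ι ℂ) : Submodule ℂ (ι → ℂ) :=
  LinearMap.range ρ.mulVecLin


/-! ### Auxiliary lemmas -/

lemma trace_eq_sum_eig {n : Type} [Fintype n] [DecidableEq n] {A : Matrix n n ℂ}
    (hA : A.IsHermitian) : A.trace = ∑ i, (hA.eigenvalues i : ℂ) := by
  exact hA.trace_eq_sum_eigenvalues

lemma entropy_nonneg {n : Type} [Fintype n] [DecidableEq n] {A : Matrix n n ℂ}
    (hA : A.PosSemidef) (ht : A.trace = 1) : 0 ≤ entropy A := by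
  rw [entropy, dif_pos hA.1]
  have hsum : ∑ i, hA.1.eigenvalues i = 1 := by
    have h2 := trace_eq_sum_eig hA.1
    rw [ht] at h2
    exact_mod_cast h2.symm
  refine Finset.sum_nonneg fun i _ => Real.negMulLog_nonneg (hA.eigenvalues_nonneg i) ?_
  calc hA.1.eigenvalues i ≤ ∑ j, hA.1.eigenvalues j :=
        Finset.single_le_sum (fun j _ => hA.eigenvalues_nonneg j) (Finset.mem_univ i)
    _ = 1 := hsum

lemma quadForm_vecMulVec {ι : Type} [Fintype ι] (φ x : ι → ℂ) :
    star x ⬝ᵥ (vecMulVec φ (star φ)).mulVec x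
      = (starRingEnd ℂ) (star φ ⬝ᵥ x) * (star φ ⬝ᵥ x) := by
  simp only [dotProduct, mulVec, vecMulVec_apply, Pi.star_apply, map_sum, _root_.map_mul,
    Finset.mul_sum, Finset.sum_mul, RingHom.id_apply]
  rw [Finset.sum_comm]
  refine Finset.sum_congr rfl fun i _ => Finset.sum_congr rfl fun j _ => ?_
  simp [RCLike.star_def]
  ring

lemma pure_isState {ι : Type} [Fintype ι] {ρ : Matrix ι ι ℂ} (h : IsPureState ρ) :
    IsState ρ := by
  obtain ⟨φ, hφ, rfl⟩ := h
  constructor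
  · rw [posSemidef_iff_dotProduct_mulVec]
    constructor
    · ext i j
      simp [conjTranspose_apply, vecMulVec_apply, mul_comm]
    · intro x
      rw [quadForm_vecMulVec]
      rw [Complex.conj_mul']
      positivity
  · rw [Matrix.trace]
    simpa [Matrix.diag, vecMulVec_apply, dotProduct, mul_comm] using hφ

lemma trRight_trace {ι κ : Type} [Fintype ι] [Fintype κ]
    (ρ : Matrix (ι × κ) (ι × κ) ℂ) : (trRight ρ).trace = ρ.trace := by
  simp [trRight, Matrix.trace, Matrix.diag, Fintype.sum_prod_type]

lemma trLeft_trace {ι κ : Type} [Fintype ι] [Fintype κ]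
    (ρ : Matrix (ι × κ) (ι × κ) ℂ) : (trLeft ρ).trace = ρ.trace := by
  rw [Matrix.trace, Matrix.trace, Fintype.sum_prod_type]
  rw [Finset.sum_comm]
  rfl

lemma trRight_posSemidef {ι κ : Type} [Fintype ι] [Fintype κ]
    {ρ : Matrix (ι × κ) (ι × κ) ℂ} (hρ : ρ.PosSemidef) : (trRight ρ).PosSemidef := by
  rw [posSemidef_iff_dotProduct_mulVec]
  constructor
  · ext i j
    simp only [conjTranspose_apply, trRight, of_apply, star_sum]
    refine Finset.sum_congr rfl fun k _ => ?_
    exact congrFun (congrFun hρ.1 (i,k)) (j,k)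
  · intro x
    classical
    have key : star x ⬝ᵥ (trRight ρ).mulVec x
        = ∑ k : κ, star (fun p : ι × κ => if p.2 = k then x p.1 else 0) ⬝ᵥ
            ρ.mulVec (fun p : ι × κ => if p.2 = k then x p.1 else 0) := by
      simp only [dotProduct, mulVec, trRight, of_apply, Pi.star_apply, Fintype.sum_prod_type,
        apply_ite (star : ℂ → ℂ), star_zero, ite_mul, zero_mul, mul_ite, mul_zero]
      simp only [Finset.sum_ite_eq', Finset.mem_univ, if_true, Finset.mul_sum, Finset.sum_mul]
      conv_lhs => enter [2,a]; rw [Finset.sum_comm]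
      rw [Finset.sum_comm]
    rw [key]
    exact Finset.sum_nonneg fun k _ => hρ.dotProduct_mulVec_nonneg _

lemma trLeft_posSemidef {ι κ : Type} [Fintype ι] [Fintype κ]
    {ρ : Matrix (ι × κ) (ι × κ) ℂ} (hρ : ρ.PosSemidef) : (trLeft ρ).PosSemidef := by
  rw [posSemidef_iff_dotProduct_mulVec]
  constructor
  · ext k l
    simp only [conjTranspose_apply, trLeft, of_apply, star_sum]
    refine Finset.sum_congr rfl fun i _ => ?_
    exact congrFun (congrFun hρ.1 (i,k)) (i,l)
  · intro x
    classical
    have key : star x ⬝ᵥ (trLeft ρ).mulVec x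
        = ∑ k : ι, star (fun p : ι × κ => if p.1 = k then x p.2 else 0) ⬝ᵥ
            ρ.mulVec (fun p : ι × κ => if p.1 = k then x p.2 else 0) := by
      simp only [dotProduct, mulVec, trLeft, of_apply, Pi.star_apply, Fintype.sum_prod_type,
        apply_ite (star : ℂ → ℂ), star_zero, ite_mul, zero_mul, mul_ite, mul_zero]
      simp only [Finset.sum_ite_irrel, Finset.sum_const_zero, Finset.sum_ite_eq,
        Finset.sum_ite_eq', Finset.mem_univ, if_true, Finset.mul_sum, Finset.sum_mul]
      conv_lhs => enter [2,a]; rw [Finset.sum_comm]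
      rw [Finset.sum_comm]
    rw [key]
    exact Finset.sum_nonneg fun k _ => hρ.dotProduct_mulVec_nonneg _

lemma reorder_pure {a b a' b' : Type} [Fintype a] [Fintype b] [Fintype a'] [Fintype b']
    {ρ : Matrix ((a × b) × (a' × b')) ((a × b) × (a' × b')) ℂ} (h : IsPureState ρ) :
    IsPureState (reorder ρ) := by
  obtain ⟨φ, hφ, rfl⟩ := h
  refine ⟨φ ∘ (Equiv.prodProdProdComm a b a' b').symm, ?_, ?_⟩
  · rw [← hφ]
    exact Fintype.sum_equiv (Equiv.prodProdProdComm a b a' b').symm _ _ (fun i => rfl)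
  · ext i j
    simp [reorder, vecMulVec_apply]

lemma vecMulVec_smul_quad {ι : Type} [Fintype ι] (c : ℂ) (φ : ι → ℂ) :
    vecMulVec (c • φ) (star (c • φ)) = (c * star c) • vecMulVec φ (star φ) := by
  ext i j
  simp [vecMulVec_apply, smul_eq_mul]
  ring

lemma pure_rigid {ι : Type} [Fintype ι] {φ : ι → ℂ} (hφ : star φ ⬝ᵥ φ = 1)
    {n : ℕ} (p : Fin (n + 1) → ℝ) (π : Fin (n + 1) → Matrix ι ι ℂ)
    (hp : ∀ i, 0 < p i) (hπ : ∀ i, IsPureState (π i))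
    (hsum : (∑ i, (p i : ℂ) • π i) = vecMulVec φ (star φ)) :
    ∀ i, π i = vecMulVec φ (star φ) := by
  classical
  choose ψ hψ1 hψ2 using hπ
  have quad : ∀ x : ι → ℂ, star φ ⬝ᵥ x = 0 → ∀ i, star (ψ i) ⬝ᵥ x = 0 := by
    intro x hx
    have h0 : star x ⬝ᵥ (vecMulVec φ (star φ)).mulVec x = 0 := by
      rw [quadForm_vecMulVec, hx]; ring
    have hquad : ∀ u : ι → ℂ, star x ⬝ᵥ (vecMulVec u (star u)).mulVec x
        = ((Complex.normSq (star u ⬝ᵥ x) : ℝ) : ℂ) := by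
      intro u
      rw [quadForm_vecMulVec, Complex.conj_mul']
      norm_cast
      rw [← Complex.sq_norm]
    have hexp : star x ⬝ᵥ (vecMulVec φ (star φ)).mulVec x
        = ∑ i, (((p i * Complex.normSq (star (ψ i) ⬝ᵥ x) : ℝ)) : ℂ) := by
      have hmv : (∑ i, (p i : ℂ) • π i) *ᵥ x = ∑ i, ((p i : ℂ) • π i) *ᵥ x := by
        ext j
        simp [Matrix.mulVec, dotProduct, Matrix.sum_apply, Finset.sum_mul]
        rw [Finset.sum_comm]
      have hdp : star x ⬝ᵥ (∑ i, ((p i : ℂ) • π i) *ᵥ x)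
          = ∑ i, star x ⬝ᵥ (((p i : ℂ) • π i) *ᵥ x) := by
        simp only [dotProduct, Finset.sum_apply, Finset.mul_sum]
        rw [Finset.sum_comm]
      rw [← hsum, hmv, hdp]
      refine Finset.sum_congr rfl fun i _ => ?_
      rw [smul_mulVec, dotProduct_smul, hψ2 i, hquad]
      push_cast
      simp [smul_eq_mul]
    rw [h0] at hexp
    have hreal : ∑ i, p i * Complex.normSq (star (ψ i) ⬝ᵥ x) = 0 := by
      exact_mod_cast hexp.symm
    intro i
    have hz : p i * Complex.normSq (star (ψ i) ⬝ᵥ x) = 0 :=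
      (Finset.sum_eq_zero_iff_of_nonneg (fun j _ =>
        mul_nonneg (hp j).le (Complex.normSq_nonneg _))).mp hreal i (Finset.mem_univ i)
    have : Complex.normSq (star (ψ i) ⬝ᵥ x) = 0 := by
      rcases mul_eq_zero.mp hz with h | h
      · exact absurd h (hp i).ne'
      · exact h
    exact Complex.normSq_eq_zero.mp this
  have hprop : ∀ i, ψ i = (starRingEnd ℂ) (star (ψ i) ⬝ᵥ φ) • φ := by
    intro i
    funext j
    have hx : star φ ⬝ᵥ (Pi.single j 1 - (star φ ⬝ᵥ Pi.single j 1) • φ) = 0 := by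
      rw [dotProduct_sub, dotProduct_smul, hφ, smul_eq_mul, mul_one, sub_self]
    have h1 := quad _ hx i
    rw [dotProduct_sub, dotProduct_smul, smul_eq_mul, sub_eq_zero] at h1
    have hsingle : ∀ v : ι → ℂ, star v ⬝ᵥ Pi.single j 1 = (starRingEnd ℂ) (v j) := by
      intro v
      simp [dotProduct, Pi.single_apply, RCLike.star_def]
    rw [hsingle, hsingle] at h1
    have h2 := congrArg (starRingEnd ℂ) h1
    simp only [_root_.map_mul, Complex.conj_conj] at h2
    rw [h2]
    simp [Pi.smul_apply, smul_eq_mul]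
    ring
  intro i
  set c := (starRingEnd ℂ) (star (ψ i) ⬝ᵥ φ) with hc
  have hψi : ψ i = c • φ := hprop i
  have hnorm : c * star c = 1 := by
    have h1 := hψ1 i
    rw [hψi] at h1
    have h3 : star (c • φ) ⬝ᵥ (c • φ) = (star c * c) * (star φ ⬝ᵥ φ) := by
      simp [dotProduct, smul_eq_mul, Finset.mul_sum]
      refine Finset.sum_congr rfl fun k _ => ?_
      ring
    rw [h3, hφ, mul_one] at h1
    rw [mul_comm]; exact h1
  rw [hψ2 i, hψi, vecMulVec_smul_quad, hnorm, one_smul]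

lemma ensemble_sum_p {ι : Type} [Fintype ι] {ρ : Matrix ι ι ℂ} (ht : ρ.trace = 1)
    {n : ℕ} {p : Fin (n + 1) → ℝ} {π : Fin (n + 1) → Matrix ι ι ℂ}
    (hπ : ∀ i, IsPureState (π i)) (hs : (∑ i, (p i : ℂ) • π i) = ρ) :
    ∑ i, p i = 1 := by
  have h := congrArg Matrix.trace hs
  rw [Matrix.trace_sum, ht] at h
  have h2 : ∑ i, ((p i : ℝ) : ℂ) = 1 := by
    rw [← h]
    refine Finset.sum_congr rfl fun i _ => ?_
    rw [Matrix.trace_smul, (pure_isState (hπ i)).2, smul_eq_mul, mul_one]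
  exact_mod_cast h2

lemma pureEnt_nonneg {ι κ : Type} [Fintype ι] [Fintype κ] [DecidableEq ι]
    {π : Matrix (ι × κ) (ι × κ) ℂ} (h : IsPureState π) : 0 ≤ pureEnt π := by
  have hs := pure_isState h
  exact entropy_nonneg (trRight_posSemidef hs.1) (by rw [trRight_trace, hs.2])

lemma Em_le_Ef {ι κ : Type} [Fintype ι] [Fintype κ] [DecidableEq ι]
    {ρ : Matrix (ι × κ) (ι × κ) ℂ} (ht : ρ.trace = 1) : Em ρ ≤ Ef ρ := by
  classical
  unfold Em Ef
  have hbdd : BddBelow { e : ℝ | ∃ (n : ℕ) (p : Fin (n + 1) → ℝ)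
      (π : Fin (n + 1) → Matrix (ι × κ) (ι × κ) ℂ),
    (∀ i, 0 < p i) ∧ (∀ i, IsPureState (π i)) ∧
    (∑ i, (p i : ℂ) • π i) = ρ ∧
    e = Finset.univ.inf' Finset.univ_nonempty fun i => pureEnt (π i) } := by
    refine ⟨0, fun e he => ?_⟩
    obtain ⟨n, p, π, hp, hπ, hs, rfl⟩ := he
    exact Finset.le_inf' _ _ fun i _ => pureEnt_nonneg (hπ i)
  rcases Set.eq_empty_or_nonempty { e : ℝ | ∃ (n : ℕ) (p : Fin (n + 1) → ℝ)
      (π : Fin (n + 1) → Matrix (ι × κ) (ι × κ) ℂ),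
    (∀ i, 0 < p i) ∧ (∀ i, IsPureState (π i)) ∧
    (∑ i, (p i : ℂ) • π i) = ρ ∧
    e = ∑ i, p i * pureEnt (π i) } with hemp | hne
  · rw [hemp, Real.sInf_empty]
    have h0 : { e : ℝ | ∃ (n : ℕ) (p : Fin (n + 1) → ℝ)
        (π : Fin (n + 1) → Matrix (ι × κ) (ι × κ) ℂ),
      (∀ i, 0 < p i) ∧ (∀ i, IsPureState (π i)) ∧
      (∑ i, (p i : ℂ) • π i) = ρ ∧
      e = Finset.univ.inf' Finset.univ_nonempty fun i => pureEnt (π i) } = ∅ := by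
      rw [Set.eq_empty_iff_forall_notMem] at hemp ⊢
      rintro e ⟨n, p, π, hp, hπ, hs, rfl⟩
      exact hemp (∑ i, p i * pureEnt (π i)) ⟨n, p, π, hp, hπ, hs, rfl⟩
    rw [h0, Real.sInf_empty]
  · refine le_csInf hne ?_
    rintro e ⟨n, p, π, hp, hπ, hs, rfl⟩
    refine le_trans (csInf_le hbdd ⟨n, p, π, hp, hπ, hs, rfl⟩) ?_
    have hp1 : ∑ i, p i = 1 := ensemble_sum_p ht hπ hs
    have h1 : ∀ i ∈ Finset.univ, p i * (Finset.univ.inf' Finset.univ_nonempty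
        fun j => pureEnt (π j)) ≤ p i * pureEnt (π i) := fun i _ =>
      mul_le_mul_of_nonneg_left (Finset.inf'_le _ (Finset.mem_univ i)) (hp i).le
    have h2 := Finset.sum_le_sum h1
    rw [← Finset.sum_mul, hp1, one_mul] at h2
    exact h2

lemma Em_pure {ι κ : Type} [Fintype ι] [Fintype κ] [DecidableEq ι]
    {R : Matrix (ι × κ) (ι × κ) ℂ} (h : IsPureState R) : Em R = pureEnt R := by
  obtain ⟨φ, hφ, hR⟩ := h
  unfold Em
  have hset : { e : ℝ | ∃ (n : ℕ) (p : Fin (n + 1) → ℝ)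
      (π : Fin (n + 1) → Matrix (ι × κ) (ι × κ) ℂ),
    (∀ i, 0 < p i) ∧ (∀ i, IsPureState (π i)) ∧
    (∑ i, (p i : ℂ) • π i) = R ∧
    e = Finset.univ.inf' Finset.univ_nonempty fun i => pureEnt (π i) } = {pureEnt R} := by
    ext e
    simp only [Set.mem_setOf_eq, Set.mem_singleton_iff]
    constructor
    · rintro ⟨n, p, π, hp, hπ, hs, rfl⟩
      have hall := pure_rigid hφ p π hp hπ (by rw [hs, hR])
      have hπR : ∀ i, π i = R := fun i => by rw [hall i, ← hR]
      have : (fun i => pureEnt (π i)) = fun _ : Fin (n + 1) => pureEnt R := by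
        funext i; rw [hπR i]
      rw [this, Finset.inf'_const]
    · rintro rfl
      exact ⟨0, fun _ => 1, fun _ => R, fun _ => one_pos, fun _ => ⟨φ, hφ, hR⟩,
        by simp, by rw [Finset.inf'_const]⟩
  rw [hset, csInf_singleton]

lemma Ef_pure {ι κ : Type} [Fintype ι] [Fintype κ] [DecidableEq ι]
    {R : Matrix (ι × κ) (ι × κ) ℂ} (h : IsPureState R) : Ef R = pureEnt R := by
  have htr : R.trace = 1 := (pure_isState h).2
  obtain ⟨φ, hφ, hR⟩ := h
  unfold Ef
  have hset : { e : ℝ | ∃ (n : ℕ) (p : Fin (n + 1) → ℝ)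
      (π : Fin (n + 1) → Matrix (ι × κ) (ι × κ) ℂ),
    (∀ i, 0 < p i) ∧ (∀ i, IsPureState (π i)) ∧
    (∑ i, (p i : ℂ) • π i) = R ∧
    e = ∑ i, p i * pureEnt (π i) } = {pureEnt R} := by
    ext e
    simp only [Set.mem_setOf_eq, Set.mem_singleton_iff]
    constructor
    · rintro ⟨n, p, π, hp, hπ, hs, rfl⟩
      have hall := pure_rigid hφ p π hp hπ (by rw [hs, hR])
      have hπR : ∀ i, π i = R := fun i => by rw [hall i, ← hR]
      have hp1 : ∑ i, p i = 1 := ensemble_sum_p htr hπ hs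
      calc ∑ i, p i * pureEnt (π i) = ∑ i, p i * pureEnt R := by
            refine Finset.sum_congr rfl fun i _ => ?_; rw [hπR i]
        _ = (∑ i, p i) * pureEnt R := by rw [Finset.sum_mul]
        _ = pureEnt R := by rw [hp1, one_mul]
    · rintro rfl
      exact ⟨0, fun _ => 1, fun _ => R, fun _ => one_pos, fun _ => ⟨φ, hφ, hR⟩,
        by simp, by simp⟩
  rw [hset, csInf_singleton]

/-- (v) ⟹ (i): strong superadditivity of `E_f` (for all spaces and states)
implies strong superadditivity of `E_m` for pure states. -/
theorem Ef_strong_superadditive_implies_Em_strong_superadditive_pure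
    (hEf : ∀ (a b a' b' : Type) [Fintype a] [Fintype b] [Fintype a'] [Fintype b']
      [DecidableEq a] [DecidableEq b] [DecidableEq a'] [DecidableEq b'],
      ∀ σ : Matrix ((a × b) × (a' × b')) ((a × b) × (a' × b')) ℂ,
        IsState σ →
        Ef (reorder σ) ≥ Ef (trRight σ) + Ef (trLeft σ))
    {a b a' b' : Type} [Fintype a] [Fintype b] [Fintype a'] [Fintype b']
    [DecidableEq a] [DecidableEq b] [DecidableEq a'] [DecidableEq b']
    (ρ : Matrix ((a × b) × (a' × b')) ((a × b) × (a' × b')) ℂ)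
    (hρ : IsPureState ρ) :
    Em (reorder ρ) ≥ Em (trRight ρ) + Em (trLeft ρ) := by
  have hstate := pure_isState hρ
  have hRpure : IsPureState (reorder ρ) := reorder_pure hρ
  have h1 : Em (reorder ρ) = Ef (reorder ρ) := by rw [Em_pure hRpure, Ef_pure hRpure]
  have h2 := hEf a b a' b' ρ hstate
  have h3 : Em (trRight ρ) ≤ Ef (trRight ρ) :=
    Em_le_Ef (by rw [trRight_trace, hstate.2])
  have h4 : Em (trLeft ρ) ≤ Ef (trLeft ρ) :=
    Em_le_Ef (by rw [trLeft_trace, hstate.2])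
  linarith

end QAdditivity
end
end

section
/- For every state ρ on a tensor product H₁ ⊗ H₂ of finite-dimensional complex Hilbert spaces, E_m(ρ) equals the minimum of E(|φ⟩⟨φ|) over all unit vectors φ lying in the range (support) of ρ. -/
open Matrix Kronecker BigOperators ComplexOrder

noncomputable section

namespace QAdditivity

set_option linter.unusedSectionVars false

section Helpers
variable {n : Type} [Fintype n] [DecidableEq n]

lemma vecMulVec_mulVec_eq (w v x : n → ℂ) : vecMulVec w v *ᵥ x = (v ⬝ᵥ x) • w := by
  ext i
  simp only [vecMulVec_apply, mulVec, dotProduct, Pi.smul_apply, smul_eq_mul, Finset.sum_mul]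
  exact Finset.sum_congr rfl fun j _ => by ring

lemma quad_vecMulVec (φ x : n → ℂ) :
    star x ⬝ᵥ (vecMulVec φ (star φ) *ᵥ x) =
      ((Complex.normSq (star φ ⬝ᵥ x) : ℝ) : ℂ) := by
  rw [vecMulVec_mulVec_eq, dotProduct_smul, smul_eq_mul,
    star_dotProduct x φ, Complex.star_def, Complex.mul_conj]

lemma isHermitian_vecMulVec (φ : n → ℂ) : (vecMulVec φ (star φ)).IsHermitian := by
  ext i j
  simp [conjTranspose_apply, vecMulVec_apply, mul_comm]

lemma posSemidef_real_smul_vecMulVec {c : ℝ} (hc : 0 ≤ c) (φ : n → ℂ) :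
    ((c : ℂ) • vecMulVec φ (star φ)).PosSemidef := by
  refine posSemidef_iff_dotProduct_mulVec.mpr ⟨?_, fun x => ?_⟩
  · ext i j
    simp [conjTranspose_apply, vecMulVec_apply, mul_comm]
  · rw [smul_mulVec, dotProduct_smul, smul_eq_mul, quad_vecMulVec, ← Complex.ofReal_mul]
    rw [Complex.zero_le_real]
    exact mul_nonneg hc (Complex.normSq_nonneg _)

lemma posSemidef_sum {ι' : Type} (s : Finset ι') (g : ι' → Matrix n n ℂ)
    (h : ∀ i ∈ s, (g i).PosSemidef) : (∑ i ∈ s, g i).PosSemidef :=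
  Finset.sum_induction g _ (fun _ _ ha hb => ha.add hb) Matrix.PosSemidef.zero h

lemma rankOne_decomposition {A : Matrix n n ℂ} (hA : A.IsHermitian) :
    A = ∑ j, (hA.eigenvalues j : ℂ) •
      vecMulVec ⇑(hA.eigenvectorBasis j) (star ⇑(hA.eigenvectorBasis j)) := by
  conv_lhs => rw [hA.spectral_theorem, Unitary.conjStarAlgAut_apply]
  ext i k
  simp only [mul_apply, mul_diagonal, diagonal_apply, Matrix.sum_apply, Matrix.smul_apply,
    vecMulVec_apply, Pi.star_apply, star_apply, IsHermitian.eigenvectorUnitary_apply,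
    Function.comp_apply, smul_eq_mul, RCLike.star_def, RCLike.ofReal_alg,
    mul_ite, ite_mul, mul_zero, zero_mul, Finset.sum_ite_eq', Finset.mem_univ, if_true]
  exact Finset.sum_congr rfl fun j _ => by rw [Complex.real_smul]; ring

lemma eigenvectorBasis_unit {A : Matrix n n ℂ} (hA : A.IsHermitian) (j : n) :
    star ⇑(hA.eigenvectorBasis j) ⬝ᵥ ⇑(hA.eigenvectorBasis j) = 1 := by
  have h := hA.eigenvectorBasis.orthonormal.1 j
  have h2 := inner_self_eq_norm_sq_to_K (𝕜 := ℂ) (hA.eigenvectorBasis j)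
  rw [h] at h2
  rw [EuclideanSpace.inner_eq_star_dotProduct, dotProduct_comm] at h2
  simpa using h2

lemma trace_vecMulVec (φ : n → ℂ) : (vecMulVec φ (star φ)).trace = star φ ⬝ᵥ φ := by
  simp [Matrix.trace, Matrix.diag, vecMulVec_apply, dotProduct, mul_comm]

lemma sum_eigenvalues_eq_trace' {A : Matrix n n ℂ} (hA : A.IsHermitian) :
    (∑ j, (hA.eigenvalues j : ℂ)) = A.trace := by
  conv_rhs => rw [rankOne_decomposition hA]
  rw [trace_sum]
  simp [trace_smul, trace_vecMulVec, eigenvectorBasis_unit hA, smul_eq_mul]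
  simp [dotProduct_comm (hA.eigenvectorBasis _).ofLp, eigenvectorBasis_unit hA]

lemma entropy_nonneg_s6 {σ : Matrix n n ℂ} (h : σ.PosSemidef) (ht : σ.trace = 1) :
    0 ≤ entropy σ := by
  rw [entropy, dif_pos h.1]
  have hsum : ∑ j, h.1.eigenvalues j = 1 := by
    have h2 := sum_eigenvalues_eq_trace' h.1
    rw [ht] at h2
    exact_mod_cast h2
  refine Finset.sum_nonneg fun j _ => Real.negMulLog_nonneg (h.eigenvalues_nonneg j) ?_
  calc h.1.eigenvalues j ≤ ∑ i, h.1.eigenvalues i :=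
        Finset.single_le_sum (fun i _ => h.eigenvalues_nonneg i) (Finset.mem_univ j)
    _ = 1 := hsum

lemma posSemidef_decomposition {τ : Matrix n n ℂ} (hτ : τ.PosSemidef) :
    ∃ (m : ℕ) (q : Fin m → ℝ) (ψ : Fin m → n → ℂ),
      (∀ i, 0 < q i) ∧ (∀ i, star (ψ i) ⬝ᵥ ψ i = 1) ∧
      τ = ∑ i, (q i : ℂ) • vecMulVec (ψ i) (star (ψ i)) := by
  classical
  have hH := hτ.1
  set s : Finset n := Finset.univ.filter (fun j => hH.eigenvalues j ≠ 0) with hs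
  set e : Fin s.card ≃ {x // x ∈ s} := s.equivFin.symm with he
  refine ⟨s.card, fun i => hH.eigenvalues (e i), fun i => ⇑(hH.eigenvectorBasis (e i)),
    fun i => ?_, fun i => eigenvectorBasis_unit hH _, ?_⟩
  · have h2 : ((e i : {x // x ∈ s}) : n) ∈ s := (e i).2
    simp only [hs, Finset.mem_filter] at h2
    exact lt_of_le_of_ne (hτ.eigenvalues_nonneg _) (Ne.symm h2.2)
  · calc τ = ∑ j, (hH.eigenvalues j : ℂ) •
          vecMulVec ⇑(hH.eigenvectorBasis j) (star ⇑(hH.eigenvectorBasis j)) :=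
          rankOne_decomposition hH
      _ = ∑ j ∈ s, (hH.eigenvalues j : ℂ) •
          vecMulVec ⇑(hH.eigenvectorBasis j) (star ⇑(hH.eigenvectorBasis j)) := by
          rw [hs]
          refine (Finset.sum_filter_of_ne fun j _ hj => ?_).symm
          intro h0
          exact hj (by rw [h0]; simp)
      _ = ∑ (x : {x // x ∈ s}), (hH.eigenvalues x : ℂ) •
          vecMulVec ⇑(hH.eigenvectorBasis x) (star ⇑(hH.eigenvectorBasis x)) :=
          (Finset.sum_coe_sort s _).symm
      _ = ∑ i, (hH.eigenvalues (e i) : ℂ) •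
          vecMulVec ⇑(hH.eigenvectorBasis (e i)) (star ⇑(hH.eigenvectorBasis (e i))) :=
          (Equiv.sum_comp e _).symm

lemma cs_dotProduct (u v : n → ℂ) :
    Complex.normSq (star u ⬝ᵥ v) ≤ (star u ⬝ᵥ u).re * (star v ⬝ᵥ v).re := by
  have h := inner_mul_inner_self_le (𝕜 := ℂ)
    ((WithLp.equiv 2 (n → ℂ)).symm u) ((WithLp.equiv 2 (n → ℂ)).symm v)
  rw [EuclideanSpace.inner_eq_star_dotProduct, EuclideanSpace.inner_eq_star_dotProduct,
    EuclideanSpace.inner_eq_star_dotProduct, EuclideanSpace.inner_eq_star_dotProduct] at h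
  simp only [WithLp.equiv_symm_apply, WithLp.ofLp_toLp] at h
  rw [dotProduct_comm v, dotProduct_comm u, dotProduct_comm u (star u),
    dotProduct_comm v (star v)] at h
  rw [star_dotProduct v u, norm_star] at h
  have e1 : Complex.normSq (star u ⬝ᵥ v) = ‖star u ⬝ᵥ v‖ * ‖star u ⬝ᵥ v‖ := by
    rw [Complex.normSq_eq_norm_sq, sq]
  rw [e1]
  exact h

lemma expansion (B : OrthonormalBasis n ℂ (EuclideanSpace ℂ n)) (φ : n → ℂ) :
    ∑ j, (star ⇑(B j) ⬝ᵥ φ) • ⇑(B j) = φ := by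
  have h := B.sum_repr' ((WithLp.equiv 2 (n → ℂ)).symm φ)
  have h2 := congrArg (WithLp.equiv 2 (n → ℂ)) h
  simpa [EuclideanSpace.inner_eq_star_dotProduct, dotProduct_comm φ] using h2

lemma dotProduct_self_re (v : n → ℂ) : star v ⬝ᵥ v = ((star v ⬝ᵥ v).re : ℂ) := by
  have h := dotProduct_star_self_nonneg v
  obtain ⟨hre, him⟩ := Complex.le_def.mp h
  apply Complex.ext
  · simp
  · simpa using him.symm

lemma mem_supp_of_decomp {ρ τ : Matrix n n ℂ} (hρ : ρ.PosSemidef) {c : ℝ} (hc : 0 < c)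
    {φ : n → ℂ} (hτ : τ.PosSemidef)
    (hsum : ρ = (c : ℂ) • vecMulVec φ (star φ) + τ) : φ ∈ supp ρ := by
  have hker : ∀ u : n → ℂ, ρ *ᵥ u = 0 → star φ ⬝ᵥ u = 0 := by
    intro u hu
    have h0 : star u ⬝ᵥ (ρ *ᵥ u) = 0 := by rw [hu, dotProduct_zero]
    rw [hsum, add_mulVec, dotProduct_add, smul_mulVec, dotProduct_smul, smul_eq_mul,
      quad_vecMulVec] at h0
    have h2 : (0:ℂ) ≤ star u ⬝ᵥ (τ *ᵥ u) := hτ.dotProduct_mulVec_nonneg u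
    have h1 : (0:ℂ) ≤ (c:ℂ) * ((Complex.normSq (star φ ⬝ᵥ u) : ℝ) : ℂ) := by
      rw [← Complex.ofReal_mul, Complex.zero_le_real]
      exact mul_nonneg hc.le (Complex.normSq_nonneg _)
    have h3 : (c:ℂ) * ((Complex.normSq (star φ ⬝ᵥ u) : ℝ) : ℂ) = 0 := by
      have hle : (c:ℂ) * ((Complex.normSq (star φ ⬝ᵥ u) : ℝ) : ℂ) ≤ 0 := by
        rw [eq_neg_of_add_eq_zero_left h0]
        simpa using h2
      exact le_antisymm hle h1
    rw [← Complex.ofReal_mul] at h3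
    have h4 : c * Complex.normSq (star φ ⬝ᵥ u) = 0 := by exact_mod_cast h3
    rcases mul_eq_zero.mp h4 with h | h
    · exact absurd h (ne_of_gt hc)
    · exact Complex.normSq_eq_zero.mp h
  have hH := hρ.1
  refine ⟨∑ j, (if hH.eigenvalues j = 0 then 0 else
      ((hH.eigenvalues j)⁻¹ : ℂ) * (star ⇑(hH.eigenvectorBasis j) ⬝ᵥ φ)) •
      ⇑(hH.eigenvectorBasis j), ?_⟩
  show ρ.mulVecLin _ = φ
  rw [map_sum]
  simp only [_root_.map_smul, mulVecLin_apply, hH.mulVec_eigenvectorBasis]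
  have hterm : ∀ j, (if hH.eigenvalues j = 0 then 0 else
      ((hH.eigenvalues j)⁻¹ : ℂ) * (star ⇑(hH.eigenvectorBasis j) ⬝ᵥ φ)) •
        (hH.eigenvalues j • ⇑(hH.eigenvectorBasis j)) =
      (star ⇑(hH.eigenvectorBasis j) ⬝ᵥ φ) • ⇑(hH.eigenvectorBasis j) := by
    intro j
    by_cases h : hH.eigenvalues j = 0
    · rw [if_pos h]
      have h0 : ρ *ᵥ ⇑(hH.eigenvectorBasis j) = 0 := by
        rw [hH.mulVec_eigenvectorBasis, h, zero_smul]
      have h1 := hker _ h0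
      have h2 : star ⇑(hH.eigenvectorBasis j) ⬝ᵥ φ = 0 := by
        rw [star_dotProduct, h1, star_zero]
      rw [h2, zero_smul, zero_smul]
    · rw [if_neg h, RCLike.real_smul_eq_coe_smul (K := ℂ), smul_smul]
      congr 1
      field_simp
      exact mul_comm _ _
  rw [Finset.sum_congr rfl fun j _ => hterm j]
  exact expansion _ φ

lemma exists_pos_smul_le {ρ : Matrix n n ℂ} (hρ : ρ.PosSemidef) {φ : n → ℂ}
    (hφ : φ ∈ supp ρ) (hφ1 : star φ ⬝ᵥ φ = 1) :
    ∃ c : ℝ, 0 < c ∧ (ρ - (c : ℂ) • vecMulVec φ (star φ)).PosSemidef := by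
  obtain ⟨y, hy⟩ := hφ
  obtain ⟨Bm, hB⟩ : ∃ B : Matrix n n ℂ, ρ = Bᴴ * B := by
    open scoped MatrixOrder in
    exact ⟨CFC.sqrt ρ, by
      rw [← star_eq_conjTranspose, (CFC.sqrt_nonneg ρ).isSelfAdjoint.star_eq,
        CFC.sqrt_mul_sqrt_self ρ hρ.nonneg]⟩
  set u := Bm *ᵥ y with hu
  have hφu : φ = Bmᴴ *ᵥ u := by
    rw [← hy, mulVecLin_apply, hB, ← mulVec_mulVec]
  have hstarφ : ∀ x, star φ ⬝ᵥ x = star u ⬝ᵥ (Bm *ᵥ x) := by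
    intro x
    rw [hφu, star_mulVec, conjTranspose_conjTranspose, ← dotProduct_mulVec]
  have hquad : ∀ x, star x ⬝ᵥ (ρ *ᵥ x) = star (Bm *ᵥ x) ⬝ᵥ (Bm *ᵥ x) := by
    intro x
    rw [hB, ← mulVec_mulVec, dotProduct_mulVec, ← star_mulVec]
  have hu0 : u ≠ 0 := by
    intro h
    rw [h, mulVec_zero] at hφu
    rw [hφu] at hφ1
    simp at hφ1
  set d := (star u ⬝ᵥ u).re with hd
  have hdpos : 0 < d := by
    have h1 : (0:ℂ) ≤ star u ⬝ᵥ u := dotProduct_star_self_nonneg u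
    have h2 : star u ⬝ᵥ u ≠ 0 := fun h => hu0 (dotProduct_star_self_eq_zero.mp h)
    have h3 : (0:ℂ) < star u ⬝ᵥ u := lt_of_le_of_ne h1 (Ne.symm h2)
    exact (Complex.lt_def.mp h3).1
  refine ⟨d⁻¹, by positivity, posSemidef_iff_dotProduct_mulVec.mpr ⟨?_, fun x => ?_⟩⟩
  · exact hρ.1.sub ((posSemidef_real_smul_vecMulVec (by positivity) φ).1)
  · rw [sub_mulVec, dotProduct_sub, smul_mulVec, dotProduct_smul, smul_eq_mul,
      quad_vecMulVec, hquad, dotProduct_self_re (Bm *ᵥ x), ← Complex.ofReal_mul,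
      ← Complex.ofReal_sub, Complex.zero_le_real, sub_nonneg]
    have hcs := cs_dotProduct u (Bm *ᵥ x)
    rw [← hstarφ x] at hcs
    rw [← hd] at hcs
    calc d⁻¹ * Complex.normSq (star φ ⬝ᵥ x) ≤ d⁻¹ * (d * (star (Bm *ᵥ x) ⬝ᵥ (Bm *ᵥ x)).re) :=
          mul_le_mul_of_nonneg_left hcs (by positivity)
      _ = (star (Bm *ᵥ x) ⬝ᵥ (Bm *ᵥ x)).re := by field_simp

end Helpers

section PureHelpers
variable {ι κ : Type} [Fintype ι] [Fintype κ] [DecidableEq ι] [DecidableEq κ]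

lemma trRight_vecMulVec (φ : ι × κ → ℂ) :
    trRight (vecMulVec φ (star φ)) =
      (Matrix.of fun i k => φ (i, k)) * (Matrix.of fun i k => φ (i, k))ᴴ := by
  ext i j
  simp [trRight, mul_apply, vecMulVec_apply, conjTranspose_apply]

lemma trace_trRight (ρ : Matrix (ι × κ) (ι × κ) ℂ) : (trRight ρ).trace = ρ.trace := by
  simp [trRight, Matrix.trace, Matrix.diag, Fintype.sum_prod_type]

lemma pureEnt_nonneg_s6 {φ : ι × κ → ℂ} (h1 : star φ ⬝ᵥ φ = 1) :
    0 ≤ pureEnt (vecMulVec φ (star φ)) := by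
  refine entropy_nonneg_s6 ?_ ?_
  · rw [trRight_vecMulVec]
    exact posSemidef_self_mul_conjTranspose _
  · rw [trace_trRight, trace_vecMulVec, h1]

end PureHelpers

/-- `E_m(ρ)` equals the minimal entanglement of a unit vector in the support of
`ρ`. -/
theorem Em_eq_min_over_support
    {ι κ : Type} [Fintype ι] [Fintype κ] [DecidableEq ι] [DecidableEq κ]
    (ρ : Matrix (ι × κ) (ι × κ) ℂ) (hρ : IsState ρ) :
    Em ρ = sInf { e : ℝ | ∃ φ : ι × κ → ℂ,
      star φ ⬝ᵥ φ = 1 ∧ φ ∈ supp ρ ∧ e = pureEnt (vecMulVec φ (star φ)) } := by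
  obtain ⟨hpsd, htr⟩ := hρ
  set S2 := { e : ℝ | ∃ φ : ι × κ → ℂ,
      star φ ⬝ᵥ φ = 1 ∧ φ ∈ supp ρ ∧ e = pureEnt (vecMulVec φ (star φ)) } with hS2
  set EmSet := { e : ℝ | ∃ (n : ℕ) (p : Fin (n + 1) → ℝ)
      (π : Fin (n + 1) → Matrix (ι × κ) (ι × κ) ℂ),
    (∀ i, 0 < p i) ∧ (∀ i, IsPureState (π i)) ∧
    (∑ i, (p i : ℂ) • π i) = ρ ∧
    e = Finset.univ.inf' Finset.univ_nonempty fun i => pureEnt (π i) } with hEmSet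
  have hEm : Em ρ = sInf EmSet := rfl
  -- a pure-state decomposition of ρ
  obtain ⟨m, q, ψ, hq, hψ, hdecomp⟩ := posSemidef_decomposition hpsd
  obtain ⟨m', rfl⟩ : ∃ m', m = m' + 1 := by
    cases m with
    | zero =>
      exfalso
      rw [Finset.univ_eq_empty, Finset.sum_empty] at hdecomp
      rw [hdecomp, trace_zero] at htr
      exact zero_ne_one htr
    | succ k => exact ⟨k, rfl⟩
  have hmemEm : (Finset.univ.inf' Finset.univ_nonempty
      fun i => pureEnt (vecMulVec (ψ i) (star (ψ i)))) ∈ EmSet :=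
    ⟨m', q, fun i => vecMulVec (ψ i) (star (ψ i)), hq,
      fun i => ⟨ψ i, hψ i, rfl⟩, hdecomp.symm, rfl⟩
  have hEmLB : ∀ e ∈ EmSet, (0:ℝ) ≤ e := by
    rintro e ⟨n, p, π, hp, hpure, hsum, rfl⟩
    refine Finset.le_inf' _ _ fun i _ => ?_
    obtain ⟨φ, hφ1, hφeq⟩ := hpure i
    rw [hφeq]
    exact pureEnt_nonneg_s6 hφ1
  have hS2LB : ∀ e ∈ S2, (0:ℝ) ≤ e := by
    rintro e ⟨φ, h1, -, rfl⟩
    exact pureEnt_nonneg_s6 h1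
  have hsupp : ∀ {n : ℕ} (p : Fin (n+1) → ℝ) (π : Fin (n+1) → Matrix (ι × κ) (ι × κ) ℂ),
      (∀ i, 0 < p i) → (∀ i, IsPureState (π i)) → (∑ i, (p i : ℂ) • π i) = ρ →
      ∀ (i : Fin (n+1)) (φ : ι × κ → ℂ), π i = vecMulVec φ (star φ) → φ ∈ supp ρ := by
    intro n p π hp hpure hsum i φ hφ
    refine mem_supp_of_decomp hpsd (hp i)
      (τ := ∑ j ∈ Finset.univ.erase i, (p j : ℂ) • π j) ?_ ?_
    · refine posSemidef_sum _ _ fun j _ => ?_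
      obtain ⟨χ, hχ, hχeq⟩ := hpure j
      rw [hχeq]
      exact posSemidef_real_smul_vecMulVec (hp j).le χ
    · rw [← hφ, ← hsum]
      exact (Finset.add_sum_erase _ _ (Finset.mem_univ i)).symm
  have hsub : EmSet ⊆ S2 := by
    rintro e ⟨n, p, π, hp, hpure, hsum, rfl⟩
    obtain ⟨i, -, hi⟩ := Finset.exists_mem_eq_inf' Finset.univ_nonempty
      (fun i => pureEnt (π i))
    obtain ⟨φ, hφ1, hφeq⟩ := hpure i
    exact ⟨φ, hφ1, hsupp p π hp hpure hsum i φ hφeq, by rw [hi, hφeq]⟩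
  rw [hEm]
  apply le_antisymm
  · refine le_csInf ?_ ?_
    · exact ⟨_, hsub hmemEm⟩
    · rintro e ⟨φ, hφ1, hφsupp, rfl⟩
      obtain ⟨c, hc, hcpsd⟩ := exists_pos_smul_le hpsd hφsupp hφ1
      obtain ⟨m2, q2, ψ2, hq2, hψ2, hdec2⟩ := posSemidef_decomposition hcpsd
      set π : Fin (m2 + 1) → Matrix (ι × κ) (ι × κ) ℂ :=
        Fin.cons (vecMulVec φ (star φ)) (fun i => vecMulVec (ψ2 i) (star (ψ2 i))) with hπ
      have hmem : (Finset.univ.inf' Finset.univ_nonempty fun i => pureEnt (π i)) ∈ EmSet := by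
        refine ⟨m2, Fin.cons c q2, π, ?_, ?_, ?_, rfl⟩
        · intro i
          refine Fin.cases ?_ ?_ i
          · simpa using hc
          · intro j; simpa using hq2 j
        · intro i
          refine Fin.cases ?_ ?_ i
          · exact ⟨φ, hφ1, by simp [hπ]⟩
          · intro j; exact ⟨ψ2 j, hψ2 j, by simp [hπ]⟩
        · rw [Fin.sum_univ_succ]
          simp only [hπ, Fin.cons_zero, Fin.cons_succ]
          rw [← hdec2]
          abel
      have h1 : sInf EmSet ≤ Finset.univ.inf' Finset.univ_nonempty fun i => pureEnt (π i) :=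
        csInf_le ⟨0, fun e' he' => hEmLB e' he'⟩ hmem
      have h2 : (Finset.univ.inf' Finset.univ_nonempty fun i => pureEnt (π i)) ≤
          pureEnt (vecMulVec φ (star φ)) := by
        have h3 := Finset.inf'_le (fun i => pureEnt (π i)) (Finset.mem_univ (0 : Fin (m2+1)))
        exact h3
      exact h1.trans h2
  · exact csInf_le_csInf ⟨0, fun e he => hS2LB e he⟩ ⟨_, hmemEm⟩ hsub

end QAdditivity
end
end

section
/- Let ρ and π be positive semidefinite operators on H ⊗ H' (finite-dimensional complex Hilbert spaces). If the support (range) of π is contained in the support of ρ, then the support of tr_{H'} π is contained in the support of tr_{H'} ρ. -/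
open Matrix Kronecker BigOperators ComplexOrder

noncomputable section

namespace QAdditivity

/-- For a symmetric operator on a finite-dimensional inner product space,
the range is the orthogonal complement of the kernel. -/
lemma isSymmetric_range_eq_ker_orthogonal {E : Type*} [NormedAddCommGroup E]
    [InnerProductSpace ℂ E] [FiniteDimensional ℂ E]
    {T : E →ₗ[ℂ] E} (hT : T.IsSymmetric) :
    LinearMap.range T = (LinearMap.ker T)ᗮ := by
  apply Submodule.eq_of_le_of_finrank_eq
  · rintro _ ⟨y, rfl⟩
    rw [Submodule.mem_orthogonal]
    intro u hu
    rw [← hT u y, LinearMap.mem_ker.mp hu, inner_zero_left]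
  · have h1 := LinearMap.finrank_range_add_finrank_ker T
    have h2 := Submodule.finrank_add_finrank_orthogonal (K := LinearMap.ker T)
    omega

lemma toEuclideanLin_apply' {ι : Type} [Fintype ι] [DecidableEq ι]
    (A : Matrix ι ι ℂ) (y : ι → ℂ) :
    Matrix.toEuclideanLin A ((WithLp.equiv 2 (ι → ℂ)).symm y) =
      (WithLp.equiv 2 (ι → ℂ)).symm (A *ᵥ y) :=
  Matrix.toEuclideanLin_apply_piLp_toLp A y

lemma range_toEuclideanLin_le {ι : Type} [Fintype ι] [DecidableEq ι]
    {A B : Matrix ι ι ℂ} (h : supp B ≤ supp A) :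
    LinearMap.range (Matrix.toEuclideanLin B) ≤ LinearMap.range (Matrix.toEuclideanLin A) := by
  rintro _ ⟨w, rfl⟩
  set e := (WithLp.equiv 2 (ι → ℂ))
  have hw : Matrix.toEuclideanLin B w = e.symm (B *ᵥ (e w)) := by
    rw [← toEuclideanLin_apply' B (e w), Equiv.symm_apply_apply]
  obtain ⟨z, hz⟩ := h ⟨e w, rfl⟩
  refine ⟨e.symm z, ?_⟩
  rw [toEuclideanLin_apply', hw]
  exact congrArg _ hz

lemma ker_le_of_supp_le {ι : Type} [Fintype ι] [DecidableEq ι]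
    {A B : Matrix ι ι ℂ} (hA : A.IsHermitian) (hB : B.IsHermitian)
    (h : supp B ≤ supp A) : ∀ y, A *ᵥ y = 0 → B *ᵥ y = 0 := by
  intro y hy
  have hTA := Matrix.isHermitian_iff_isSymmetric.mp hA
  have hTB := Matrix.isHermitian_iff_isSymmetric.mp hB
  have hr := range_toEuclideanLin_le h
  have hker : LinearMap.ker (Matrix.toEuclideanLin A) ≤
      LinearMap.ker (Matrix.toEuclideanLin B) := by
    have h1 := isSymmetric_range_eq_ker_orthogonal hTA
    have h2 := isSymmetric_range_eq_ker_orthogonal hTB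
    have := Submodule.orthogonal_le hr
    rwa [h1, h2, Submodule.orthogonal_orthogonal, Submodule.orthogonal_orthogonal] at this
  have hyA : (WithLp.equiv 2 (ι → ℂ)).symm y ∈ LinearMap.ker (Matrix.toEuclideanLin A) := by
    rw [LinearMap.mem_ker, toEuclideanLin_apply', hy]
    rfl
  have hyB := hker hyA
  rw [LinearMap.mem_ker, toEuclideanLin_apply'] at hyB
  exact (WithLp.equiv 2 (ι → ℂ)).symm.injective (by rw [hyB]; rfl)

lemma supp_le_supp_of_ker {ι : Type} [Fintype ι] [DecidableEq ι]
    {A B : Matrix ι ι ℂ} (hA : A.IsHermitian) (hB : B.IsHermitian)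
    (hk : ∀ y, A *ᵥ y = 0 → B *ᵥ y = 0) : supp B ≤ supp A := by
  have hTA := Matrix.isHermitian_iff_isSymmetric.mp hA
  have hTB := Matrix.isHermitian_iff_isSymmetric.mp hB
  have hker : LinearMap.ker (Matrix.toEuclideanLin A) ≤
      LinearMap.ker (Matrix.toEuclideanLin B) := by
    intro w hw
    rw [LinearMap.mem_ker] at hw ⊢
    set e := (WithLp.equiv 2 (ι → ℂ))
    have hw' : A *ᵥ (e w) = 0 := by
      have : Matrix.toEuclideanLin A w = e.symm (A *ᵥ (e w)) := by
        rw [← toEuclideanLin_apply' A (e w), Equiv.symm_apply_apply]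
      rw [this] at hw
      have := e.symm.injective (hw.trans (by rfl : (0 : EuclideanSpace ℂ ι) = e.symm 0).symm ▸ hw)
      exact (by simpa using congrArg e hw : A *ᵥ e w = e 0).trans rfl
    have hB' := hk _ hw'
    have : Matrix.toEuclideanLin B w = e.symm (B *ᵥ (e w)) := by
      rw [← toEuclideanLin_apply' B (e w), Equiv.symm_apply_apply]
    rw [this, hB']
    rfl
  have hr : LinearMap.range (Matrix.toEuclideanLin B) ≤
      LinearMap.range (Matrix.toEuclideanLin A) := by
    rw [isSymmetric_range_eq_ker_orthogonal hTB, isSymmetric_range_eq_ker_orthogonal hTA]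
    exact Submodule.orthogonal_le hker
  rintro _ ⟨y, rfl⟩
  set e := (WithLp.equiv 2 (ι → ℂ))
  have : e.symm (B *ᵥ y) ∈ LinearMap.range (Matrix.toEuclideanLin B) :=
    ⟨e.symm y, toEuclideanLin_apply' B y⟩
  obtain ⟨w, hw⟩ := hr this
  refine ⟨e w, ?_⟩
  have : Matrix.toEuclideanLin A w = e.symm (A *ᵥ (e w)) := by
    rw [← toEuclideanLin_apply' A (e w), Equiv.symm_apply_apply]
  rw [this] at hw
  have := e.symm.injective hw
  simpa [Matrix.mulVecLin_apply] using this

lemma trRight_isHermitian {ι ι' : Type} [Fintype ι] [Fintype ι']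
    {M : Matrix (ι × ι') (ι × ι') ℂ} (hM : M.IsHermitian) :
    (trRight M).IsHermitian := by
  unfold Matrix.IsHermitian
  ext i j
  simp only [Matrix.conjTranspose_apply, trRight, Matrix.of_apply, star_sum]
  exact Finset.sum_congr rfl fun k _ => hM.apply (i, k) (j, k)

lemma trRight_mulVec_eq {ι ι' : Type} [Fintype ι] [Fintype ι'] [DecidableEq ι']
    (M : Matrix (ι × ι') (ι × ι') ℂ) (x : ι → ℂ) (i : ι) :
    (trRight M *ᵥ x) i =
      ∑ k, (M *ᵥ fun p : ι × ι' => if p.2 = k then x p.1 else 0) (i, k) := by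
  simp only [Matrix.mulVec, dotProduct, trRight, Matrix.of_apply,
    Fintype.sum_prod_type, mul_ite, mul_zero, Finset.sum_ite_eq', Finset.mem_univ, if_true,
    Finset.sum_mul]
  exact Finset.sum_comm

lemma dot_trRight_eq {ι ι' : Type} [Fintype ι] [Fintype ι'] [DecidableEq ι']
    (M : Matrix (ι × ι') (ι × ι') ℂ) (x : ι → ℂ) :
    star x ⬝ᵥ (trRight M *ᵥ x) =
      ∑ k, star (fun p : ι × ι' => if p.2 = k then x p.1 else 0) ⬝ᵥ
        (M *ᵥ fun p : ι × ι' => if p.2 = k then x p.1 else 0) := by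
  simp only [dotProduct, Pi.star_apply, trRight_mulVec_eq, Finset.mul_sum,
    Fintype.sum_prod_type, apply_ite (star : ℂ → ℂ), star_zero, ite_mul, zero_mul,
    Finset.sum_ite_eq', Finset.mem_univ, if_true]
  exact Finset.sum_comm

/-- If the support of the positive semidefinite operator `π` is contained in
that of `ρ`, the same holds after taking partial traces over `H'`. -/
theorem supp_trRight_mono
    {ι ι' : Type} [Fintype ι] [Fintype ι']
    (ρ π : Matrix (ι × ι') (ι × ι') ℂ)
    (hρ : ρ.PosSemidef) (hπ : π.PosSemidef)
    (h : supp π ≤ supp ρ) :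
    supp (trRight π) ≤ supp (trRight ρ) := by
  classical
  have hker : ∀ y, ρ *ᵥ y = 0 → π *ᵥ y = 0 := ker_le_of_supp_le hρ.1 hπ.1 h
  apply supp_le_supp_of_ker (trRight_isHermitian hρ.1) (trRight_isHermitian hπ.1)
  intro x hx
  set v : ι' → (ι × ι' → ℂ) := fun k p => if p.2 = k then x p.1 else 0 with hv
  have hsum : ∑ k, star (v k) ⬝ᵥ ρ *ᵥ v k = 0 := by
    rw [← dot_trRight_eq, hx, dotProduct_zero]
  have hzero : ∀ k, ρ *ᵥ v k = 0 := by
    intro k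
    have hterm : star (v k) ⬝ᵥ ρ *ᵥ v k = 0 :=
      (Finset.sum_eq_zero_iff_of_nonneg (fun k _ => hρ.dotProduct_mulVec_nonneg (v k))).mp hsum k (Finset.mem_univ k)
    exact (hρ.dotProduct_mulVec_zero_iff (v k)).mp hterm
  have hπzero : ∀ k, π *ᵥ v k = 0 := fun k => hker _ (hzero k)
  funext i
  rw [Pi.zero_apply, trRight_mulVec_eq]
  exact Finset.sum_eq_zero fun k _ => congrFun (hπzero k) (i, k)

end QAdditivity
end
end
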